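/- Let 2 < p < ∞. Then there does not exist a bounded linear operator T : L_p → ℓ_2 which is a sign embedding; that is, for every bounded linear T : L_p → ℓ_2 and every δ > 0 there exists a sign x ∈ L_p with ‖Tx‖ < δ‖x‖_p. -/

import Mathlib

open MeasureTheory Set Filter Topology
open scoped ENNReal NNReal

/-- Lebesgue measure on `[0,1]`. -/
noncomputable def μ01 : Measure ℝ := volume.restrict (Set.Icc 0 1)

/-- `x` is a sign: a.e. it takes values in `{-1, 0, 1}`. -/
def IsSign {p : ℝ≥0∞} (x : Lp ℝ p μ01) : Prop :=
  ∀ᵐ t ∂μ01, x t = 1 ∨ x t = -1 ∨ x t = 0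

instance : IsFiniteMeasure μ01 := by
  constructor
  rw [μ01, Measure.restrict_apply_univ, Real.volume_Icc]
  norm_num

/-- The coercion of a finite sum in `Lp` agrees a.e. with the sum of the coercions. -/
lemma Lp_coeFn_sum {α E : Type*} [MeasurableSpace α] {μ : Measure α} [NormedAddCommGroup E]
    {p : ℝ≥0∞} {ι : Type*} (s : Finset ι) (f : ι → Lp E p μ) :
    ⇑(∑ i ∈ s, f i) =ᵐ[μ] fun t => ∑ i ∈ s, f i t := by
  induction s using Finset.cons_induction with
  | empty => simp only [Finset.sum_empty]; exact Lp.coeFn_zero E p μ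
  | cons a s ha ih =>
    rw [Finset.sum_cons]
    filter_upwards [Lp.coeFn_add (f a) (∑ i ∈ s, f i), ih] with t h1 h2
    simp only [Finset.sum_cons, h1, Pi.add_apply, h2]

/-- In a real inner product space, some choice of signs makes the squared norm of a signed
sum at least the sum of squared norms (parallelogram law / averaging argument). -/
lemma exists_signs_norm_sq {E : Type*} [NormedAddCommGroup E] [InnerProductSpace ℝ E]
    (n : ℕ) (v : ℕ → E) :
    ∃ ε : ℕ → ℝ, (∀ i, ε i = 1 ∨ ε i = -1) ∧
      ∑ i ∈ Finset.range n, ‖v i‖ ^ 2 ≤ ‖∑ i ∈ Finset.range n, ε i • v i‖ ^ 2 := by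
  induction n with
  | zero => exact ⟨fun _ => 1, fun _ => Or.inl rfl, by simp⟩
  | succ n ih =>
    obtain ⟨ε, hε, h⟩ := ih
    set w := ∑ i ∈ Finset.range n, ε i • v i with hw
    have hpar : ‖w + v n‖ ^ 2 + ‖w - v n‖ ^ 2 = 2 * (‖w‖ ^ 2 + ‖v n‖ ^ 2) := by
      have := parallelogram_law_with_norm ℝ w (v n)
      nlinarith [this]
    by_cases hc : ‖w‖ ^ 2 + ‖v n‖ ^ 2 ≤ ‖w + v n‖ ^ 2
    · refine ⟨Function.update ε n 1, ?_, ?_⟩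
      · intro i
        rcases eq_or_ne i n with rfl | hne
        · simp
        · simpa [Function.update_of_ne hne] using hε i
      · rw [Finset.sum_range_succ, Finset.sum_range_succ]
        have hs : ∑ i ∈ Finset.range n, Function.update ε n 1 i • v i = w := by
          rw [hw]
          refine Finset.sum_congr rfl fun i hi => ?_
          rw [Function.update_of_ne (Finset.mem_range.mp hi).ne]
        rw [hs, Function.update_self, one_smul]
        linarith
    · refine ⟨Function.update ε n (-1), ?_, ?_⟩
      · intro i
        rcases eq_or_ne i n with rfl | hne
        · simp
        · simpa [Function.update_of_ne hne] using hε i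
      · rw [Finset.sum_range_succ, Finset.sum_range_succ]
        have hs : ∑ i ∈ Finset.range n, Function.update ε n (-1) i • v i = w := by
          rw [hw]
          refine Finset.sum_congr rfl fun i hi => ?_
          rw [Function.update_of_ne (Finset.mem_range.mp hi).ne]
        rw [hs, Function.update_self, neg_one_smul]
        have : w + -v n = w - v n := by abel
        rw [this]
        linarith

/-- If `2 < p < ∞`, no bounded linear operator `T : L_p[0,1] → ℓ₂` is a sign embedding:
for every such `T` and every `δ > 0` there is a sign `x ∈ L_p` with `‖T x‖ < δ ‖x‖`. -/
theorem no_sign_embedding_Lp_to_l2 (p : ℝ≥0∞) [Fact (1 ≤ p)] (hp2 : 2 < p) (hp : p ≠ ∞)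
    (T : Lp ℝ p μ01 →L[ℝ] lp (fun _ : ℕ => ℝ) 2) (δ : ℝ) (hδ : 0 < δ) :
    ∃ x : Lp ℝ p μ01, IsSign x ∧ ‖T x‖ < δ * ‖x‖ := by
  by_contra hcon
  push_neg at hcon
  have hp0 : p ≠ 0 := (lt_trans (by norm_num) hp2).ne'
  set pr := p.toReal with hprdef
  have hpr2 : 2 < pr := by
    have := (ENNReal.toReal_lt_toReal (by norm_num : (2 : ℝ≥0∞) ≠ ⊤) hp).mpr hp2
    simpa using this
  have hpr0 : 0 < pr := by linarith
  have hα : 0 < 1 - 2 / pr := by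
    have : 2 / pr < 1 := (div_lt_one hpr0).mpr (by linarith)
    linarith
  -- choose n large
  have htend : Tendsto (fun n : ℕ => ((n : ℝ)) ^ (1 - 2 / pr)) atTop atTop :=
    (tendsto_rpow_atTop hα).comp tendsto_natCast_atTop_atTop
  obtain ⟨n, hnC, hn0⟩ :=
    ((htend.eventually_gt_atTop (‖T‖ ^ 2 / δ ^ 2)).and (eventually_gt_atTop 0)).exists
  have hnR : (0 : ℝ) < n := Nat.cast_pos.mpr hn0
  -- the intervals
  set A : ℕ → Set ℝ := fun i => Ico ((i : ℝ) / n) (((i : ℝ) + 1) / n) with hA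
  have hAm : ∀ i, MeasurableSet (A i) := fun i => measurableSet_Ico
  have hAsub : ∀ i < n, A i ⊆ Icc 0 1 := by
    intro i hi t ht
    obtain ⟨h1, h2⟩ := ht
    constructor
    · exact le_trans (by positivity) h1
    · have : ((i : ℝ) + 1) / n ≤ 1 := by
        rw [div_le_one hnR]
        exact_mod_cast Nat.succ_le_of_lt hi
      linarith
  have hdisj : ∀ i j (t : ℝ), t ∈ A i → t ∈ A j → i = j := by
    intro i j t hi hj
    obtain ⟨hi1, hi2⟩ := hi
    obtain ⟨hj1, hj2⟩ := hj
    have h1 : (i : ℝ) < (j : ℝ) + 1 := by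
      have := lt_of_le_of_lt hi1 hj2
      rwa [div_lt_div_iff_of_pos_right hnR] at this
    have h2 : (j : ℝ) < (i : ℝ) + 1 := by
      have := lt_of_le_of_lt hj1 hi2
      rwa [div_lt_div_iff_of_pos_right hnR] at this
    have h1' : i < j + 1 := by exact_mod_cast h1
    have h2' : j < i + 1 := by exact_mod_cast h2
    omega
  have hμA : ∀ i < n, μ01 (A i) = ENNReal.ofReal (1 / n) := by
    intro i hi
    rw [μ01, Measure.restrict_apply (hAm i), inter_eq_self_of_subset_left (hAsub i hi),
      hA, Real.volume_Ico]
    congr 1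
    field_simp
    ring
  -- the indicator signs
  set χ : ℕ → Lp ℝ p μ01 := fun i => indicatorConstLp p (hAm i) (measure_ne_top _ _) (1 : ℝ)
    with hχ
  have hsign : ∀ i, IsSign (χ i) := by
    intro i
    filter_upwards [indicatorConstLp_coeFn (p := p) (hs := hAm i)
      (hμs := measure_ne_top μ01 (A i)) (c := (1 : ℝ))] with t ht
    simp only [hχ]
    rw [ht, Set.indicator_apply]
    by_cases h : t ∈ A i <;> simp [h]
  have hnormχ : ∀ i < n, ‖χ i‖ = ((n : ℝ)⁻¹) ^ (1 / pr) := by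
    intro i hi
    simp only [hχ]
    rw [norm_indicatorConstLp hp0 hp, measureReal_def, hμA i hi, norm_one, one_mul,
      ENNReal.toReal_ofReal (by positivity)]
    rw [one_div]
  -- choose the signs from the Hilbert-space lemma
  obtain ⟨ε, hε1, hεsum⟩ := exists_signs_norm_sq n (fun i => T (χ i))
  have hεabs : ∀ i, |ε i| = 1 := by
    intro i; rcases hε1 i with h | h <;> simp [h]
  set x : Lp ℝ p μ01 := ∑ i ∈ Finset.range n, ε i • χ i with hx
  -- T x is the signed sum
  have hTx : T x = ∑ i ∈ Finset.range n, ε i • T (χ i) := by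
    rw [hx, map_sum]
    simp only [ContinuousLinearMap.map_smul]
  -- the a.e. bound |x| ≤ 1
  have hxbound : ∀ᵐ t ∂μ01, ‖x t‖ ≤ 1 := by
    have hind : ∀ᵐ t ∂μ01, ∀ i, (χ i) t = (A i).indicator (fun _ => (1 : ℝ)) t :=
      ae_all_iff.mpr fun i => indicatorConstLp_coeFn
    have hsm : ∀ᵐ t ∂μ01, ∀ i : ℕ, ((ε i • χ i : Lp ℝ p μ01)) t = ε i • (χ i) t :=
      ae_all_iff.mpr fun i => Lp.coeFn_smul (ε i) (χ i)
    filter_upwards [Lp_coeFn_sum (Finset.range n) (fun i => ε i • χ i), hind, hsm]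
      with t h1 h2 h3
    rw [hx, h1]
    have hsum : ∑ i ∈ Finset.range n, ((ε i • χ i : Lp ℝ p μ01)) t
        = ∑ i ∈ Finset.range n, ε i * (A i).indicator (fun _ => (1 : ℝ)) t := by
      refine Finset.sum_congr rfl fun i _ => ?_
      rw [h3 i, h2 i, smul_eq_mul]
    rw [hsum]
    by_cases hex : ∃ j ∈ Finset.range n, t ∈ A j
    · obtain ⟨j, hj, htj⟩ := hex
      have : ∑ i ∈ Finset.range n, ε i * (A i).indicator (fun _ => (1 : ℝ)) t = ε j := by
        rw [Finset.sum_eq_single_of_mem j hj]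
        · rw [Set.indicator_of_mem htj, mul_one]
        · intro i _ hij
          rw [Set.indicator_of_notMem (fun hti => hij (hdisj i j t hti htj)), mul_zero]
      rw [this, Real.norm_eq_abs, hεabs j]
    · push_neg at hex
      have : ∑ i ∈ Finset.range n, ε i * (A i).indicator (fun _ => (1 : ℝ)) t = 0 := by
        refine Finset.sum_eq_zero fun i hi => ?_
        rw [Set.indicator_of_notMem (hex i hi), mul_zero]
      rw [this]; simp
  have hxnorm : ‖x‖ ≤ 1 := by
    have h1 : measureUnivNNReal μ01 = 1 := by
      rw [measureUnivNNReal, μ01, Measure.restrict_apply_univ, Real.volume_Icc]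
      norm_num
    have := Lp.norm_le_of_ae_bound (f := x) zero_le_one hxbound
    rwa [h1, NNReal.coe_one, Real.one_rpow, one_mul] at this
  -- the lower bound from the contradiction hypothesis
  have hlow : ∀ i ∈ Finset.range n,
      (δ * ((n : ℝ)⁻¹) ^ (1 / pr)) ^ 2 ≤ ‖T (χ i)‖ ^ 2 := by
    intro i hi
    have := hcon (χ i) (hsign i)
    rw [hnormχ i (Finset.mem_range.mp hi)] at this
    have hnn : 0 ≤ δ * ((n : ℝ)⁻¹) ^ (1 / pr) := by positivity
    exact pow_le_pow_left₀ hnn this 2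
  -- combine
  have hchain : (n : ℝ) * (δ * ((n : ℝ)⁻¹) ^ (1 / pr)) ^ 2 ≤ ‖T‖ ^ 2 := by
    have h1 : (n : ℝ) * (δ * ((n : ℝ)⁻¹) ^ (1 / pr)) ^ 2
        ≤ ∑ i ∈ Finset.range n, ‖T (χ i)‖ ^ 2 := by
      calc (n : ℝ) * (δ * ((n : ℝ)⁻¹) ^ (1 / pr)) ^ 2
          = ∑ _i ∈ Finset.range n, (δ * ((n : ℝ)⁻¹) ^ (1 / pr)) ^ 2 := by
            rw [Finset.sum_const, Finset.card_range, nsmul_eq_mul]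
        _ ≤ ∑ i ∈ Finset.range n, ‖T (χ i)‖ ^ 2 := Finset.sum_le_sum hlow
    have h2 : ‖∑ i ∈ Finset.range n, ε i • T (χ i)‖ ^ 2 ≤ ‖T‖ ^ 2 := by
      rw [← hTx]
      have hb : ‖T x‖ ≤ ‖T‖ := by
        calc ‖T x‖ ≤ ‖T‖ * ‖x‖ := T.le_opNorm x
          _ ≤ ‖T‖ * 1 := by
              exact mul_le_mul_of_nonneg_left hxnorm (norm_nonneg T)
          _ = ‖T‖ := mul_one _
      exact pow_le_pow_left₀ (norm_nonneg _) hb 2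
    linarith [hεsum]
  -- arithmetic contradiction
  have hkey : (n : ℝ) * (δ * ((n : ℝ)⁻¹) ^ (1 / pr)) ^ 2
      = δ ^ 2 * (n : ℝ) ^ (1 - 2 / pr) := by
    rw [mul_pow, ← Real.rpow_natCast (((n : ℝ)⁻¹) ^ (1 / pr)) 2,
      ← Real.rpow_mul (by positivity : (0:ℝ) ≤ (n : ℝ)⁻¹),
      Real.inv_rpow (le_of_lt hnR), ← Real.rpow_neg (le_of_lt hnR)]
    have : (n : ℝ) * (δ ^ 2 * (n : ℝ) ^ (-(1 / pr * (2:ℕ))))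
        = δ ^ 2 * ((n : ℝ) ^ (1:ℝ) * (n : ℝ) ^ (-(1 / pr * (2:ℕ)))) := by
      rw [Real.rpow_one]; ring
    rw [this, ← Real.rpow_add hnR]
    congr 2
    push_cast
    ring
  rw [hkey] at hchain
  have hfin : ‖T‖ ^ 2 < δ ^ 2 * (n : ℝ) ^ (1 - 2 / pr) := by
    calc ‖T‖ ^ 2 < (n : ℝ) ^ (1 - 2 / pr) * δ ^ 2 :=
          (div_lt_iff₀ (by positivity : (0:ℝ) < δ ^ 2)).mp hnC
      _ = δ ^ 2 * (n : ℝ) ^ (1 - 2 / pr) := mul_comm _ _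
  linarith
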